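/- Let m, n be non-negative integers, let μ be an (n|m)-hook partition (μ_{n+1} ≤ m), set ν := μ' and τ_j := ν_{m+j} for j ≥ 1. Then Σ_{i=1}^{m} ν_i(ν_i − 2i) − Σ_{j=1}^{n} τ'_j(τ'_j + 2(m−j+1)) = − Σ_{i≥1} μ_i(μ_i − 2(i−1)). -/

import Mathlib

/-- A partition: a weakly decreasing, eventually zero sequence of
non-negative integers. Here `l i` denotes the part `λ_{i+1}` (0-indexed). -/
def IsPartition (l : ℕ → ℕ) : Prop :=
  Antitone l ∧ ∃ N, ∀ i, N ≤ i → l i = 0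

/-- The conjugate partition: `conj l j` is `λ'_{j+1} = #{ i ≥ 1 : λ_i ≥ j+1 }`
(0-indexed). -/
noncomputable def conj (l : ℕ → ℕ) (j : ℕ) : ℕ :=
  Set.ncard {i : ℕ | j + 1 ≤ l i}

/-- Key characterization: `j + 1 ≤ μ_i ↔ i < μ'_j` (0-indexed). -/
lemma lt_conj {mu : ℕ → ℕ} (hmu : IsPartition mu) (i j : ℕ) :
    j + 1 ≤ mu i ↔ i < conj mu j := by
  obtain ⟨hanti, N, hN⟩ := hmu
  have hne : {i | mu i ≤ j}.Nonempty := ⟨N, by simp [hN N le_rfl]⟩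
  set c := sInf {i | mu i ≤ j} with hc
  have hmem : mu c ≤ j := Nat.sInf_mem hne
  have hiff : ∀ k, mu k ≤ j ↔ c ≤ k := by
    intro k
    exact ⟨fun h => Nat.sInf_le h, fun h => le_trans (hanti h) hmem⟩
  have hset : {i : ℕ | j + 1 ≤ mu i} = Set.Iio c := by
    ext k
    simp only [Set.mem_setOf_eq, Set.mem_Iio]
    rw [← not_le, ← hiff k]
    omega
  have hcv : conj mu j = c := by
    rw [conj, hset, ← Finset.coe_Iio, Set.ncard_coe_finset, Nat.card_Iio]
  rw [hcv, ← not_le, ← hiff i]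
  omega

lemma conj_isPartition {mu : ℕ → ℕ} (hmu : IsPartition mu) : IsPartition (conj mu) := by
  constructor
  · intro j j' hj
    by_contra h
    push_neg at h
    have h1 : j' + 1 ≤ mu (conj mu j) := (lt_conj hmu _ _).mpr h
    have h2 : j + 1 ≤ mu (conj mu j) := le_trans (by omega) h1
    have := (lt_conj hmu _ _).mp h2
    omega
  · refine ⟨mu 0, fun j hj => ?_⟩
    by_contra h
    have h0 : (0:ℕ) < conj mu j := Nat.pos_of_ne_zero h
    have := (lt_conj hmu 0 j).mpr h0
    omega

/-- The conjugate of `τ : k ↦ ν_{m+k}` (where `ν = μ'`) is `j ↦ μ_j - m`. -/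
lemma conj_conj_shift {mu : ℕ → ℕ} (hmu : IsPartition mu) (m j : ℕ) :
    conj (fun k => conj mu (m + k)) j = mu j - m := by
  have hp : IsPartition (fun k => conj mu (m + k)) := by
    obtain ⟨ha, N, hN⟩ := conj_isPartition hmu
    exact ⟨fun a b hab => ha (by omega), N, fun k hk => hN _ (by omega)⟩
  have key : ∀ k, (k < conj (fun k => conj mu (m + k)) j) ↔ k < mu j - m := by
    intro k
    rw [← lt_conj hp k j]
    show j + 1 ≤ conj mu (m + k) ↔ _
    constructor
    · intro h
      have := (lt_conj hmu j (m+k)).mpr (by omega)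
      omega
    · intro h
      have h2 : (m + k) + 1 ≤ mu j := by omega
      have := (lt_conj hmu j (m+k)).mp h2
      omega
  have h1 := key (conj (fun k => conj mu (m + k)) j)
  have h2 := key (mu j - m)
  omega

lemma sum_max (f : ℕ → ℤ) (N : ℕ) :
    ∑ j ∈ Finset.range N, ∑ k ∈ Finset.range N, f (max j k)
      = ∑ j ∈ Finset.range N, (2 * (j:ℤ) + 1) * f j := by
  induction N with
  | zero => simp
  | succ N ih =>
    rw [Finset.sum_range_succ (fun j => ∑ k ∈ Finset.range (N+1), f (max j k)),
        Finset.sum_range_succ (fun j => (2 * (j:ℤ) + 1) * f j)]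
    have h1 : ∀ j ∈ Finset.range N, ∑ k ∈ Finset.range (N+1), f (max j k)
        = (∑ k ∈ Finset.range N, f (max j k)) + f N := by
      intro j hj
      rw [Finset.sum_range_succ]
      congr 1
      rw [max_eq_right (le_of_lt (Finset.mem_range.mp hj))]
    have h2 : ∑ k ∈ Finset.range (N+1), f (max N k) = ((N:ℤ)+1) * f N := by
      rw [Finset.sum_congr rfl (fun k hk => by
        rw [max_eq_left (Nat.lt_succ_iff.mp (Finset.mem_range.mp hk))]),
        Finset.sum_const, Finset.card_range, nsmul_eq_mul]
      push_cast; ring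
    rw [Finset.sum_congr rfl h1, Finset.sum_add_distrib, Finset.sum_const,
        Finset.card_range, nsmul_eq_mul, ih, h2]
    push_cast; ring

lemma sum_two_succ (t : ℕ) :
    ∑ i ∈ Finset.range t, (2 * ((i:ℤ) + 1)) = (t:ℤ) * ((t:ℤ) + 1) := by
  induction t with
  | zero => simp
  | succ t ih => rw [Finset.sum_range_succ, ih]; push_cast; ring

lemma sum_trunc {t M : ℕ} (h : t ≤ M) (g : ℕ → ℤ) :
    ∑ i ∈ Finset.range M, (if i + 1 ≤ t then g i else 0)
      = ∑ i ∈ Finset.range t, g i := by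
  rw [← Finset.sum_subset (Finset.range_subset_range.mpr h)
    (fun x _ hx => by rw [if_neg]; simp only [Finset.mem_range] at hx; omega)]
  exact Finset.sum_congr rfl (fun i hi => by
    rw [if_pos]; exact Finset.mem_range.mp hi)

lemma conj_le {mu : ℕ → ℕ} (hmu : IsPartition mu) {N : ℕ}
    (hN : ∀ i, N ≤ i → mu i = 0) (j : ℕ) : conj mu j ≤ N := by
  by_contra h
  push_neg at h
  have := (lt_conj hmu N j).mpr h
  have := hN N le_rfl
  omega

lemma conj_cast {mu : ℕ → ℕ} (hmu : IsPartition mu) {N : ℕ}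
    (hN : ∀ i, N ≤ i → mu i = 0) (j : ℕ) :
    (conj mu j : ℤ) = ∑ k ∈ Finset.range N, (if j + 1 ≤ mu k then (1:ℤ) else 0) := by
  have hle := conj_le hmu hN j
  have : ∀ k, (if j + 1 ≤ mu k then (1:ℤ) else 0) = (if k + 1 ≤ conj mu j then (1:ℤ) else 0) := by
    intro k
    have := lt_conj hmu k j
    by_cases h : j + 1 ≤ mu k
    · rw [if_pos h, if_pos (by omega)]
    · rw [if_neg h, if_neg (by omega)]
  rw [Finset.sum_congr rfl (fun k _ => this k), sum_trunc hle]
  simp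

/-- The classical identity `Σ μ'_i(μ'_i - 2i) = - Σ μ_i(μ_i - 2(i-1))`. -/
lemma classical_id {mu : ℕ → ℕ} (hmu : IsPartition mu) {N M : ℕ}
    (hN : ∀ i, N ≤ i → mu i = 0) (hM : mu 0 ≤ M) :
    ∑ i ∈ Finset.range M, (conj mu i : ℤ) * ((conj mu i : ℤ) - 2 * ((i:ℤ) + 1))
      = - ∑ i ∈ Finset.range N, (mu i : ℤ) * ((mu i : ℤ) - 2 * (i:ℤ)) := by
  have hmuM : ∀ j, mu j ≤ M := fun j => le_trans (hmu.1 (Nat.zero_le j)) hM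
  have step1 : ∑ i ∈ Finset.range M, (conj mu i : ℤ) * (conj mu i : ℤ)
      = ∑ j ∈ Finset.range N, (2 * (j:ℤ) + 1) * (mu j : ℤ) := by
    have e1 : ∀ i, (conj mu i : ℤ) * (conj mu i : ℤ)
        = ∑ j ∈ Finset.range N, ∑ k ∈ Finset.range N,
            (if i + 1 ≤ min (mu j) (mu k) then (1:ℤ) else 0) := by
      intro i
      rw [conj_cast hmu hN i, Finset.sum_mul_sum]
      refine Finset.sum_congr rfl (fun j _ => Finset.sum_congr rfl (fun k _ => ?_))
      by_cases h1 : i + 1 ≤ mu j <;> by_cases h2 : i + 1 ≤ mu k <;>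
        simp [h1, h2, le_min_iff]
    rw [Finset.sum_congr rfl (fun i _ => e1 i), Finset.sum_comm]
    have e2 : ∀ j ∈ Finset.range N,
        (∑ i ∈ Finset.range M, ∑ k ∈ Finset.range N,
          (if i + 1 ≤ min (mu j) (mu k) then (1:ℤ) else 0))
        = ∑ k ∈ Finset.range N, ((mu (max j k) : ℕ) : ℤ) := by
      intro j _
      rw [Finset.sum_comm]
      refine Finset.sum_congr rfl (fun k _ => ?_)
      rw [sum_trunc (le_trans (min_le_left _ _) (hmuM j)) (fun _ => (1:ℤ))]
      have hmin : min (mu j) (mu k) = mu (max j k) := by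
        rcases le_total j k with h | h
        · rw [max_eq_right h, min_eq_right (hmu.1 h)]
        · rw [max_eq_left h, min_eq_left (hmu.1 h)]
      simp [hmin]
    rw [Finset.sum_congr rfl e2]
    exact sum_max (fun j => (mu j : ℤ)) N
  have step2 : ∑ i ∈ Finset.range M, (conj mu i : ℤ) * (2 * ((i:ℤ) + 1))
      = ∑ j ∈ Finset.range N, (mu j : ℤ) * ((mu j : ℤ) + 1) := by
    have e1 : ∀ i, (conj mu i : ℤ) * (2 * ((i:ℤ) + 1))
        = ∑ j ∈ Finset.range N, (if i + 1 ≤ mu j then 2 * ((i:ℤ) + 1) else 0) := by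
      intro i
      rw [conj_cast hmu hN i, Finset.sum_mul]
      refine Finset.sum_congr rfl (fun j _ => ?_)
      by_cases h : i + 1 ≤ mu j <;> simp [h]
    rw [Finset.sum_congr rfl (fun i _ => e1 i), Finset.sum_comm]
    refine Finset.sum_congr rfl (fun j _ => ?_)
    rw [sum_trunc (hmuM j) (fun i => 2 * ((i:ℤ) + 1)), sum_two_succ]
  calc ∑ i ∈ Finset.range M, (conj mu i : ℤ) * ((conj mu i : ℤ) - 2 * ((i:ℤ) + 1))
      = ∑ i ∈ Finset.range M, ((conj mu i : ℤ) * (conj mu i : ℤ)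
          - (conj mu i : ℤ) * (2 * ((i:ℤ) + 1))) := by
        refine Finset.sum_congr rfl (fun i _ => by ring)
    _ = ∑ i ∈ Finset.range M, (conj mu i : ℤ) * (conj mu i : ℤ)
          - ∑ i ∈ Finset.range M, (conj mu i : ℤ) * (2 * ((i:ℤ) + 1)) :=
        Finset.sum_sub_distrib _ _
    _ = ∑ j ∈ Finset.range N, ((2 * (j:ℤ) + 1) * (mu j : ℤ) - (mu j : ℤ) * ((mu j : ℤ) + 1)) := by
        rw [step1, step2, Finset.sum_sub_distrib]
    _ = - ∑ i ∈ Finset.range N, (mu i : ℤ) * ((mu i : ℤ) - 2 * (i:ℤ)) := by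
        rw [← Finset.sum_neg_distrib]
        refine Finset.sum_congr rfl (fun i _ => by ring)

lemma sum_lin (c m : ℕ) :
    ∑ j ∈ Finset.range c, (2 * (j:ℤ) - 2 * (m:ℤ) - 1)
      = (c:ℤ) * ((c:ℤ) - 2 * ((m:ℤ) + 1)) := by
  induction c with
  | zero => simp
  | succ c ih => rw [Finset.sum_range_succ, ih]; push_cast; ring

/-- The two sums of the statement, with the conjugate of the tail partition
rewritten as `μ_j - m`. -/
noncomputable def G (mu : ℕ → ℕ) (n m : ℕ) : ℤ :=
  ∑ i ∈ Finset.range m, (conj mu i : ℤ) * ((conj mu i : ℤ) - 2 * ((i : ℤ) + 1)) -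
  ∑ j ∈ Finset.range n, ((mu j - m : ℕ) : ℤ) *
    (((mu j - m : ℕ) : ℤ) + 2 * ((m : ℤ) - (j : ℤ)))

lemma G_step {mu : ℕ → ℕ} (hmu : IsPartition mu) {n m : ℕ} (h : mu n ≤ m) :
    G mu n (m + 1) = G mu n m := by
  set c := conj mu m with hc
  have hcn : c ≤ n := by
    by_contra hh
    push_neg at hh
    have := (lt_conj hmu n m).mpr hh
    omega
  have hdiff : ∀ j ∈ Finset.range n,
      ((mu j - (m+1) : ℕ) : ℤ) * (((mu j - (m+1) : ℕ) : ℤ) + 2 * (((m + 1 : ℕ) : ℤ) - (j:ℤ)))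
      = ((mu j - m : ℕ) : ℤ) * (((mu j - m : ℕ) : ℤ) + 2 * ((m:ℤ) - (j:ℤ)))
        + (if j + 1 ≤ c then (2 * (j:ℤ) - 2 * (m:ℤ) - 1) else 0) := by
    intro j _
    by_cases hj : m + 1 ≤ mu j
    · have hjc : j < c := (lt_conj hmu j m).mp hj
      rw [if_pos (by omega), Nat.cast_sub hj, Nat.cast_sub (le_trans (Nat.le_succ m) hj)]
      push_cast
      ring
    · have hjc : ¬ j + 1 ≤ c := by
        have := (lt_conj hmu j m)
        omega
      rw [if_neg hjc, Nat.sub_eq_zero_of_le (by omega), Nat.sub_eq_zero_of_le (by omega)]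
      simp
  unfold G
  rw [Finset.sum_range_succ, Finset.sum_congr rfl hdiff, Finset.sum_add_distrib,
      sum_trunc hcn, sum_lin c m]
  push_cast
  ring

lemma G_invariant {mu : ℕ → ℕ} (hmu : IsPartition mu) {n m M : ℕ}
    (h : mu n ≤ m) (hM : m ≤ M) : G mu n M = G mu n m := by
  induction M, hM using Nat.le_induction with
  | base => rfl
  | succ M hM ih => rw [G_step hmu (le_trans h hM), ih]

/-- Case 3 (spo(2m|2n) versus d_∞) of Lemma 4.2.
Let μ be an (n|m)-hook partition, ν := μ', τ_j := ν_{m+j}. Then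
Σ_{i=1}^{m} ν_i(ν_i − 2i) − Σ_{j=1}^{n} τ'_j(τ'_j + 2(m−j+1))
  = − Σ_{i≥1} μ_i(μ_i − 2(i−1)). -/
theorem casimir_comparison_spo_even (m n : ℕ) (mu : ℕ → ℕ)
    (hmu : IsPartition mu) (hhook : mu n ≤ m) :
    ∑ i ∈ Finset.range m,
        (conj mu i : ℤ) * ((conj mu i : ℤ) - 2 * ((i : ℤ) + 1)) -
      ∑ j ∈ Finset.range n,
        (conj (fun k => conj mu (m + k)) j : ℤ) *
          ((conj (fun k => conj mu (m + k)) j : ℤ) + 2 * ((m : ℤ) - ((j : ℤ) + 1) + 1)) =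
      - ∑ᶠ i : ℕ, (mu i : ℤ) * ((mu i : ℤ) - 2 * (i : ℤ)) := by
  obtain ⟨hanti, N, hN⟩ := id hmu
  have hfin : ∑ᶠ i : ℕ, (mu i : ℤ) * ((mu i : ℤ) - 2 * (i : ℤ))
      = ∑ i ∈ Finset.range N, (mu i : ℤ) * ((mu i : ℤ) - 2 * (i : ℤ)) := by
    apply finsum_eq_sum_of_support_subset
    intro i hi
    simp only [Function.mem_support] at hi
    simp only [Finset.coe_range, Set.mem_Iio]
    by_contra hiN
    push_neg at hiN
    rw [hN i hiN] at hi
    simp at hi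
  have hLHS : (∑ i ∈ Finset.range m,
        (conj mu i : ℤ) * ((conj mu i : ℤ) - 2 * ((i : ℤ) + 1)) -
      ∑ j ∈ Finset.range n,
        (conj (fun k => conj mu (m + k)) j : ℤ) *
          ((conj (fun k => conj mu (m + k)) j : ℤ) + 2 * ((m : ℤ) - ((j : ℤ) + 1) + 1)))
      = G mu n m := by
    unfold G
    congr 1
    refine Finset.sum_congr rfl (fun j _ => ?_)
    rw [conj_conj_shift hmu m j]
    ring
  rw [hLHS, hfin]
  set M := max m (mu 0) with hM
  rw [← G_invariant hmu hhook (le_max_left m (mu 0))]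
  have hzero : ∀ j ∈ Finset.range n, ((mu j - M : ℕ) : ℤ) *
      (((mu j - M : ℕ) : ℤ) + 2 * ((M : ℤ) - (j : ℤ))) = 0 := by
    intro j _
    rw [Nat.sub_eq_zero_of_le (le_trans (hanti (Nat.zero_le j)) (le_max_right m (mu 0)))]
    simp
  rw [G, Finset.sum_congr rfl hzero, Finset.sum_const, smul_zero, sub_zero]
  exact classical_id hmu hN (le_max_right m (mu 0))
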